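/- Basic-Step setup: n = r+s, A₁,…,A_m, C are symmetric n×n real matrices with A₁ = fromBlocks(D,0,0,0) for an r×r positive definite matrix D, and b ∈ ℝᵐ with b₁ = 0. If y ∈ ℝᵐ is feasible for the dual (D), i.e., C − Σ_{i=1}^m yᵢAᵢ ⪰ 0, then the truncation (y₂,…,y_m) is feasible for the reduced dual (D_pre), i.e., the lower-right s×s block (C − Σ_{i=2}^m yᵢAᵢ)₂₂ is positive semidefinite, and it has the same objective value: Σ_{i=2}^m bᵢyᵢ = Σ_{i=1}^m bᵢyᵢ. Consequently every objective value attained by a feasible solution of (D) is attained by a feasible solution of (D_pre), so val(D) ≤ val(D_pre). -/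

import Mathlib

open Matrix

/-- Basic-Step dual feasibility: if `y` is feasible for the dual (D), then its
truncation is feasible for the reduced dual (D_pre) with the same objective value;
consequently every objective value attained in (D) is attained in (D_pre). -/
theorem sieve_basic_step_dual (r s m : ℕ)
    (A : Fin (m + 1) → Matrix (Fin r ⊕ Fin s) (Fin r ⊕ Fin s) ℝ)
    (hA : ∀ i, (A i).IsSymm)
    (C : Matrix (Fin r ⊕ Fin s) (Fin r ⊕ Fin s) ℝ) (hC : C.IsSymm)
    (D : Matrix (Fin r) (Fin r) ℝ) (hD : D.PosDef)
    (hA0 : A 0 = fromBlocks D 0 0 0)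
    (b : Fin (m + 1) → ℝ) (hb0 : b 0 = 0) :
    (∀ y : Fin (m + 1) → ℝ, (C - ∑ i, y i • A i).PosSemidef →
        ((C - ∑ i : Fin m, y i.succ • A i.succ).toBlocks₂₂).PosSemidef ∧
        ∑ i : Fin m, b i.succ * y i.succ = ∑ i, b i * y i) ∧
    (∀ v : ℝ,
        (∃ y : Fin (m + 1) → ℝ, (C - ∑ i, y i • A i).PosSemidef ∧ ∑ i, b i * y i = v) →
        ∃ z : Fin m → ℝ, ((C - ∑ i : Fin m, z i • A i.succ).toBlocks₂₂).PosSemidef ∧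
          ∑ i : Fin m, b i.succ * z i = v) := by
  have key : ∀ y : Fin (m + 1) → ℝ, (C - ∑ i, y i • A i).PosSemidef →
      ((C - ∑ i : Fin m, y i.succ • A i.succ).toBlocks₂₂).PosSemidef ∧
      ∑ i : Fin m, b i.succ * y i.succ = ∑ i, b i * y i := by
    intro y hy
    constructor
    · have hblk : (C - ∑ i : Fin m, y i.succ • A i.succ).toBlocks₂₂
          = (C - ∑ i, y i • A i).toBlocks₂₂ := by
        ext i j
        simp [toBlocks₂₂, Fin.sum_univ_succ, hA0, fromBlocks, Matrix.sub_apply,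
          Finset.sum_apply, Matrix.smul_apply]
      rw [hblk]
      exact hy.submatrix Sum.inr
    · rw [Fin.sum_univ_succ, hb0]
      ring
  refine ⟨key, ?_⟩
  rintro v ⟨y, hy, hv⟩
  exact ⟨fun i => y i.succ, (key y hy).1, (key y hy).2.trans hv⟩
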